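/- Define G_{i j} = (−1)^{(j-i)/2} (1/2^j) (2j − 1)(j + i − 2)! / ( (i − 1)! ((j − i)/2)! ((j + i)/2 − 1)! ) when i ≤ j and i + j is even, and G_{i j} = 0 otherwise. Then for every N ≥ 1 the (N × N) matrix G is the inverse of the (N × N) matrix F: Σ_{k=1}^{N} F_{i k} G_{k j} = δ_{i j} for all 1 ≤ i, j ≤ N. -/

import Mathlib

open Polynomial intervalIntegral MeasureTheory


/-- The n-th Legendre polynomial, defined via the Rodrigues formula
P_n(eta) = (1/(2^n n!)) d^n/d eta^n (eta^2 - 1)^n. -/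
noncomputable def legendre (n : ℕ) : Polynomial ℝ :=
  ((1 : ℝ) / (2 ^ n * n.factorial)) • (Polynomial.derivative^[n] ((X ^ 2 - 1) ^ n))

/-- The matrix of moments of the Legendre polynomials:
F i j = ∫_{-1}^{1} P_{i-1}(eta) eta^{j-1} d eta (intended for i, j ≥ 1). -/
noncomputable def Fmat (i j : ℕ) : ℝ :=
  ∫ η in (-1 : ℝ)..1, (legendre (i - 1)).eval η * η ^ (j - 1)

/-- The explicit inverse matrix G of F:
G_{ij} = (-1)^{(j-i)/2} (1/2^j) (2j-1) (j+i-2)! / ((i-1)! ((j-i)/2)! ((j+i)/2 - 1)!)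
when i ≤ j and i + j is even, and G_{ij} = 0 otherwise. -/
noncomputable def Gmat (i j : ℕ) : ℝ :=
  if i ≤ j ∧ (i + j) % 2 = 0 then
    (-1 : ℝ) ^ ((j - i) / 2) * (1 / 2 ^ j) * (2 * (j : ℝ) - 1) *
      ((j + i - 2).factorial : ℝ) /
      (((i - 1).factorial : ℝ) * (((j - i) / 2).factorial : ℝ) *
        (((j + i) / 2 - 1).factorial : ℝ))
  else 0



noncomputable def R (n : ℕ) : Polynomial ℝ := (X ^ 2 - 1) ^ n

-- integrability of polynomials
lemma poly_intint (p : Polynomial ℝ) (a b : ℝ) :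
    IntervalIntegrable (fun x => p.eval x) volume a b :=
  (p.continuous).intervalIntegrable a b

-- integration by parts for polynomials
lemma poly_ibp (p q : Polynomial ℝ) :
    ∫ x in (-1:ℝ)..1, (derivative p).eval x * q.eval x
      = p.eval 1 * q.eval 1 - p.eval (-1) * q.eval (-1)
        - ∫ x in (-1:ℝ)..1, p.eval x * (derivative q).eval x := by
  have h := intervalIntegral.integral_deriv_mul_eq_sub
    (u := fun x => p.eval x) (v := fun x => q.eval x)
    (u' := fun x => (derivative p).eval x) (v' := fun x => (derivative q).eval x)
    (a := (-1:ℝ)) (b := 1)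
    (fun x _ => p.hasDerivAt x) (fun x _ => q.hasDerivAt x)
    (poly_intint _ _ _) (poly_intint _ _ _)
  rw [intervalIntegral.integral_add (f := fun x => (derivative p).eval x * q.eval x)
    (g := fun x => p.eval x * (derivative q).eval x)
    (((derivative p).continuous.mul q.continuous).intervalIntegrable _ _)
    ((p.continuous.mul (derivative q).continuous).intervalIntegrable _ _)] at h
  linarith [h]

lemma boundary_vanish (n s : ℕ) (hs : s < n) :
    (derivative^[s] (R n)).eval 1 = 0 ∧ (derivative^[s] (R n)).eval (-1) = 0 := by
  have h1 : (X - C (1:ℝ)) ^ n ∣ R n := by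
    apply pow_dvd_pow_of_dvd
    refine ⟨X + C 1, by simp only [C_1]; ring⟩
  have h2 : (X - C (-1:ℝ)) ^ n ∣ R n := by
    apply pow_dvd_pow_of_dvd
    refine ⟨X - C 1, by simp only [map_neg, C_1]; ring⟩
  constructor
  · obtain ⟨r, hr⟩ := Polynomial.pow_sub_dvd_iterate_derivative_of_pow_dvd s h1
    rw [hr]
    have : n - s ≠ 0 := Nat.sub_ne_zero_of_lt hs
    simp [zero_pow this]
  · obtain ⟨r, hr⟩ := Polynomial.pow_sub_dvd_iterate_derivative_of_pow_dvd s h2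
    rw [hr]
    have : n - s ≠ 0 := Nat.sub_ne_zero_of_lt hs
    simp [zero_pow this]

lemma iter_ibp (n : ℕ) (q : Polynomial ℝ) : ∀ s, s ≤ n →
    ∫ x in (-1:ℝ)..1, (derivative^[n] (R n)).eval x * q.eval x
      = (-1)^s * ∫ x in (-1:ℝ)..1, (derivative^[n-s] (R n)).eval x * (derivative^[s] q).eval x
  | 0, _ => by simp
  | (s+1), hs => by
    rw [iter_ibp n q s (Nat.le_of_succ_le hs)]
    have hn : n - s = (n - (s+1)) + 1 := by omega
    have key : (derivative^[n-s] (R n)) = derivative (derivative^[n-(s+1)] (R n)) := by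
      rw [hn, Function.iterate_succ_apply']
    rw [key, poly_ibp]
    obtain ⟨b1, b2⟩ := boundary_vanish n (n - (s+1)) (by omega)
    rw [b1, b2, ← Function.iterate_succ_apply' derivative]
    ring

noncomputable def Q (n : ℕ) : Polynomial ℝ := (1 - X ^ 2) ^ n

noncomputable def I (n : ℕ) : ℝ := ∫ x in (-1:ℝ)..1, (Q n).eval x

lemma I_zero : I 0 = 2 := by norm_num [I, Q]

lemma Q_deriv (m : ℕ) :
    derivative (Q (m+1)) * X = C ((m:ℝ)+1) * C (-2) * (Q m - Q (m+1)) := by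
  unfold Q
  rw [derivative_pow]
  have h1 : derivative (1 - X ^ 2 : Polynomial ℝ) = C (-2) * X := by
    rw [derivative_sub, derivative_one, derivative_X_pow]
    rw [map_neg]
    push_cast
    ring
  rw [h1]
  simp only [Nat.add_sub_cancel, pow_succ, Nat.cast_add, Nat.cast_one]
  ring

lemma I_rec (m : ℕ) : (2*(m:ℝ)+3) * I (m+1) = (2*m+2) * I m := by
  have hibp := poly_ibp (Q (m+1)) X
  have hb : (Q (m+1)).eval 1 = 0 ∧ (Q (m+1)).eval (-1) = 0 := by
    constructor <;> simp [Q]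
  have hlhs : ∫ x in (-1:ℝ)..1, (derivative (Q (m+1))).eval x * X.eval x
      = (((m:ℝ)+1) * (-2)) * (I m - I (m+1)) := by
    have key : ∀ x : ℝ, (derivative (Q (m+1))).eval x * X.eval x
        = (((m:ℝ)+1) * (-2)) * ((Q m).eval x - (Q (m+1)).eval x) := by
      intro x
      have h := congrArg (Polynomial.eval x) (Q_deriv m)
      simp only [eval_mul, eval_C, eval_sub, eval_X] at h ⊢
      linear_combination h
    rw [intervalIntegral.integral_congr (fun x _ => key x)]
    rw [intervalIntegral.integral_const_mul,
      intervalIntegral.integral_sub (poly_intint _ _ _) (poly_intint _ _ _)]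
    rfl
  rw [hlhs, hb.1, hb.2] at hibp
  simp only [derivative_X, eval_one] at hibp
  have hint : ∫ x in (-1:ℝ)..1, (Q (m+1)).eval x * 1 = I (m+1) := by
    simp [I]
  rw [hint] at hibp
  linarith

lemma I_formula (n : ℕ) :
    (((2*n+1).factorial : ℝ)) * I n = 2^(2*n+1) * ((n.factorial : ℝ))^2 := by
  induction n with
  | zero => norm_num [I_zero]
  | succ n ih =>
    have hrec := I_rec n
    have h1 : ((2*(n+1)+1).factorial : ℝ) = (2*(n:ℝ)+3) * ((2*(n:ℝ)+2) * ((2*n+1).factorial : ℝ)) := by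
      have e : 2*(n+1)+1 = (2*n+1)+1+1 := by ring
      rw [e, Nat.factorial_succ, Nat.factorial_succ]
      push_cast
      ring
    have h2 : (((n+1).factorial : ℝ)) = ((n:ℝ)+1) * (n.factorial : ℝ) := by
      rw [Nat.factorial_succ]; push_cast; ring
    rw [h1, h2]
    calc (2*(n:ℝ)+3) * ((2*(n:ℝ)+2) * ((2*n+1).factorial : ℝ)) * I (n+1)
        = (2*(n:ℝ)+2) * ((2*n+1).factorial : ℝ) * ((2*(n:ℝ)+3) * I (n+1)) := by ring
      _ = (2*(n:ℝ)+2) * ((2*n+1).factorial : ℝ) * ((2*(n:ℝ)+2) * I n) := by rw [hrec]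
      _ = (2*(n:ℝ)+2)^2 * (((2*n+1).factorial : ℝ) * I n) := by ring
      _ = (2*(n:ℝ)+2)^2 * (2^(2*n+1) * ((n.factorial : ℝ))^2) := by rw [ih]
      _ = 2^(2*(n+1)+1) * (((n:ℝ)+1) * (n.factorial : ℝ))^2 := by ring

lemma R_eq_sum (n : ℕ) :
    R n = ∑ r ∈ Finset.range (n+1), C ((-1:ℝ)^(n-r) * (n.choose r : ℝ)) * X^(2*r) := by
  unfold R
  rw [sub_eq_add_neg, add_pow]
  apply Finset.sum_congr rfl
  intro r _
  rw [← pow_mul]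
  have h1 : ((-1 : Polynomial ℝ)) = C (-1 : ℝ) := by simp
  have h2 : ((n.choose r : Polynomial ℝ)) = C ((n.choose r : ℝ)) := by
    simp [C_eq_natCast]
  rw [h1, ← C_pow, h2, C_mul]
  ring

lemma R_coeff (n m : ℕ) :
    (R n).coeff m = if m % 2 = 0 ∧ m ≤ 2*n then (-1:ℝ)^(n - m/2) * ((n.choose (m/2) : ℝ)) else 0 := by
  rw [R_eq_sum, finset_sum_coeff]
  simp only [coeff_C_mul, coeff_X_pow]
  by_cases h : m % 2 = 0 ∧ m ≤ 2*n
  · rw [if_pos h]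
    rw [Finset.sum_eq_single (m/2)]
    · rw [if_pos (by omega)]
      ring
    · intro r _ hr
      rw [if_neg (by omega)]
      ring
    · intro hmem
      exfalso
      exact hmem (Finset.mem_range.mpr (by omega))
  · rw [if_neg h]
    apply Finset.sum_eq_zero
    intro r hr
    rw [Finset.mem_range] at hr
    rw [if_neg (by omega)]
    ring

lemma R_natDegree_le (n : ℕ) : (R n).natDegree ≤ 2*n := by
  unfold R
  refine le_trans (natDegree_pow_le) ?_
  have : (X^2 - 1 : Polynomial ℝ).natDegree ≤ 2 := by
    refine le_trans (natDegree_sub_le _ _) ?_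
    simp [natDegree_X_pow]
  calc n * (X^2 - 1 : Polynomial ℝ).natDegree ≤ n * 2 := Nat.mul_le_mul_left n this
    _ = 2*n := by ring

lemma iter2n (n : ℕ) : derivative^[2*n] (R n) = C (((2*n).factorial : ℝ)) := by
  have hdeg : (derivative^[2*n] (R n)).natDegree = 0 := by
    have := Polynomial.natDegree_iterate_derivative (R n) (2*n)
    have := R_natDegree_le n
    omega
  rw [Polynomial.eq_C_of_natDegree_le_zero (le_of_eq hdeg)]
  congr 1
  rw [Polynomial.coeff_iterate_derivative]
  rw [R_coeff]
  rw [if_pos ⟨by omega, by omega⟩]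
  have h1 : (0 + 2*n)/2 = n := by omega
  rw [h1]
  simp [Nat.descFactorial_self, nsmul_eq_mul, Nat.sub_self]

lemma R_int (n : ℕ) : ∫ x in (-1:ℝ)..1, (R n).eval x = (-1:ℝ)^n * I n := by
  have key : ∀ x : ℝ, (R n).eval x = (-1:ℝ)^n * (Q n).eval x := by
    intro x
    simp only [R, Q, eval_pow, eval_sub, eval_one, eval_X, eval_mul]
    rw [← mul_pow]
    ring_nf
  rw [intervalIntegral.integral_congr (fun x _ => key x)]
  rw [intervalIntegral.integral_const_mul]
  rfl

noncomputable def T (n m : ℕ) : ℝ :=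
  ∫ x in (-1:ℝ)..1, (derivative^[n] (R n)).eval x * (derivative^[m] (R m)).eval x

lemma T_lt (n m : ℕ) (h : m < n) : T n m = 0 := by
  unfold T
  rw [iter_ibp n (derivative^[m] (R m)) n (le_refl n)]
  have hz : derivative^[n] (derivative^[m] (R m)) = 0 := by
    apply Polynomial.iterate_derivative_eq_zero
    have h1 := Polynomial.natDegree_iterate_derivative (R m) m
    have h2 := R_natDegree_le m
    omega
  rw [hz]
  simp

lemma T_self (n : ℕ) : T n n = (((2*n).factorial : ℝ)) * I n := by
  unfold T
  rw [iter_ibp n (derivative^[n] (R n)) n (le_refl n)]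
  have hz : derivative^[n] (derivative^[n] (R n)) = C (((2*n).factorial : ℝ)) := by
    rw [← Function.iterate_add_apply]
    have : n + n = 2*n := by ring
    rw [this, iter2n]
  rw [hz]
  simp only [Nat.sub_self, Function.iterate_zero, id_eq, eval_C]
  have : ∫ x in (-1:ℝ)..1, (R n).eval x * ((2*n).factorial : ℝ)
      = (((2*n).factorial : ℝ)) * ∫ x in (-1:ℝ)..1, (R n).eval x := by
    rw [← intervalIntegral.integral_const_mul]
    apply intervalIntegral.integral_congr
    intro x _
    ring
  rw [this, R_int]
  have hsq : (-1:ℝ)^n * (-1:ℝ)^n = 1 := by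
    rw [← pow_add]
    exact Even.neg_one_pow ⟨n, rfl⟩
  linear_combination (((2*n).factorial : ℝ)) * I n * hsq

lemma leg_eval (n : ℕ) (x : ℝ) :
    (legendre n).eval x = ((1:ℝ)/(2^n * n.factorial)) * (derivative^[n] (R n)).eval x := by
  unfold legendre R
  simp [smul_eq_mul]

lemma leg_inner (n m : ℕ) :
    ∫ x in (-1:ℝ)..1, (legendre n).eval x * (legendre m).eval x
      = ((1:ℝ)/(2^n * n.factorial)) * ((1:ℝ)/(2^m * m.factorial)) * T n m := by
  unfold T
  rw [← intervalIntegral.integral_const_mul]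
  apply intervalIntegral.integral_congr
  intro x _
  simp only []
  rw [leg_eval, leg_eval]
  ring

lemma T_symm (n m : ℕ) : T n m = T m n := by
  unfold T
  apply intervalIntegral.integral_congr
  intro x _
  simp only []
  ring

lemma leg_ort (n m : ℕ) (h : n ≠ m) :
    ∫ x in (-1:ℝ)..1, (legendre n).eval x * (legendre m).eval x = 0 := by
  rw [leg_inner]
  rcases Nat.lt_or_ge m n with hlt | hge
  · rw [T_lt n m hlt]; ring
  · have hlt : n < m := by omega
    rw [T_symm, T_lt m n hlt]; ring

lemma leg_norm (n : ℕ) :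
    ∫ x in (-1:ℝ)..1, (legendre n).eval x * (legendre n).eval x = 2 / (2*(n:ℝ)+1) := by
  rw [leg_inner, T_self]
  have hI := I_formula n
  have hfac : ((2*n+1).factorial : ℝ) = (2*(n:ℝ)+1) * ((2*n).factorial : ℝ) := by
    rw [Nat.factorial_succ]; push_cast; ring
  have h1 : ((n.factorial : ℝ)) ≠ 0 := Nat.cast_ne_zero.mpr (Nat.factorial_ne_zero n)
  have h2 : (((2*n).factorial : ℝ)) ≠ 0 := Nat.cast_ne_zero.mpr (Nat.factorial_ne_zero _)
  have h3 : (2:ℝ)^n ≠ 0 := by positivity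
  have h4 : (2*(n:ℝ)+1) ≠ 0 := by positivity
  have hIval : I n = 2^(2*n+1) * ((n.factorial : ℝ))^2 / ((2*(n:ℝ)+1) * ((2*n).factorial : ℝ)) := by
    rw [← hfac]
    field_simp
    linear_combination hI
  rw [hIval]
  have hpow : (2:ℝ)^(2*n+1) = 2^n * 2^n * 2 := by
    rw [pow_succ, two_mul, pow_add]
  rw [hpow]
  field_simp

lemma leg_coeff (n t : ℕ) :
    (legendre n).coeff t
      = ((1:ℝ)/(2^n * n.factorial)) * ((t+n).descFactorial n : ℝ) * (R n).coeff (t+n) := by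
  unfold legendre
  rw [coeff_smul]
  have : (Polynomial.derivative^[n] ((X ^ 2 - 1) ^ n) : Polynomial ℝ) = derivative^[n] (R n) := rfl
  rw [this, Polynomial.coeff_iterate_derivative]
  simp only [smul_eq_mul, nsmul_eq_mul]
  ring

lemma G_coeff (t j : ℕ) (hj : 1 ≤ j) (ht : t < j) :
    Gmat (t+1) j = ((2*(j:ℝ)-1)/2) * (legendre (j-1)).coeff t := by
  by_cases hpar : (t + 1 + j) % 2 = 0
  · -- same parity case
    have hd : ∃ d, j = t + 2*d + 1 := ⟨(j - t - 1)/2, by omega⟩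
    obtain ⟨d, rfl⟩ := hd
    have e0 : t + 2*d + 1 - 1 = t + 2*d := by omega
    rw [e0, leg_coeff, R_coeff]
    rw [if_pos ⟨by omega, by omega⟩]
    unfold Gmat
    rw [if_pos ⟨by omega, by omega⟩]
    have e1 : (t + 2*d + 1 - (t+1))/2 = d := by omega
    have e2 : (t + 2*d + 1 + (t+1) - 2) = 2*t + 2*d := by omega
    have e3 : (t+1) - 1 = t := by omega
    have e4 : ((t + 2*d + 1 + (t+1))/2 - 1) = t + d := by omega
    have e5 : (t + (t + 2*d))/2 = t + d := by omega
    have e6 : (t + 2*d) - (t + d) = d := by omega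
    have e8 : t + (t + 2*d) = 2*t + 2*d := by omega
    rw [e1, e2, e3, e4, e5, e6, e8]
    -- descFactorial and choose casts
    have hA : (((2*t + 2*d).descFactorial (t + 2*d)) : ℝ)
        = ((2*t + 2*d).factorial : ℝ) / (t.factorial : ℝ) := by
      rw [eq_div_iff (Nat.cast_ne_zero.mpr (Nat.factorial_ne_zero t))]
      rw [← Nat.cast_mul, Nat.cast_inj]
      have h := Nat.factorial_mul_descFactorial (n := t + (t+2*d)) (k := t + 2*d) (by omega)
      have e7 : t + (t + 2*d) - (t + 2*d) = t := by omega
      rw [e7, e8] at h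
      rw [Nat.mul_comm]
      exact h
    have hB : (((t + 2*d).choose (t + d)) : ℝ)
        = ((t + 2*d).factorial : ℝ) / ((t+d).factorial * (d.factorial : ℝ)) := by
      rw [eq_div_iff (by positivity)]
      rw [← Nat.cast_mul, ← Nat.cast_mul, Nat.cast_inj]
      have h := Nat.choose_mul_factorial_mul_factorial (n := t + 2*d) (k := t + d) (by omega)
      rw [e6] at h
      rw [← Nat.mul_assoc]
      exact h
    rw [hA, hB]
    have hnz1 : ((t.factorial : ℝ)) ≠ 0 := Nat.cast_ne_zero.mpr (Nat.factorial_ne_zero _)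
    have hnz2 : ((d.factorial : ℝ)) ≠ 0 := Nat.cast_ne_zero.mpr (Nat.factorial_ne_zero _)
    have hnz3 : (((t+d).factorial : ℝ)) ≠ 0 := Nat.cast_ne_zero.mpr (Nat.factorial_ne_zero _)
    have hnz4 : (((t+2*d).factorial : ℝ)) ≠ 0 := Nat.cast_ne_zero.mpr (Nat.factorial_ne_zero _)
    have hnz5 : (2:ℝ)^(t+2*d+1) ≠ 0 := by positivity
    have hnz6 : (2:ℝ)^(t+2*d) ≠ 0 := by positivity
    have hpw : (2:ℝ)^(t+2*d+1) = 2 * 2^(t+2*d) := by rw [pow_succ]; ring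
    rw [hpw]
    push_cast
    field_simp
  · -- opposite parity: both sides vanish
    unfold Gmat
    rw [if_neg (by omega)]
    rw [leg_coeff, R_coeff]
    rw [if_neg (by omega)]
    ring

lemma leg_deg (n : ℕ) : (legendre n).natDegree ≤ n := by
  unfold legendre
  refine le_trans (natDegree_smul_le _ _) ?_
  have h1 := Polynomial.natDegree_iterate_derivative ((X^2-1:Polynomial ℝ)^n) n
  have h2 : ((X^2-1:Polynomial ℝ)^n).natDegree ≤ 2*n := R_natDegree_le n
  omega

lemma G_sum (j N : ℕ) (hj1 : 1 ≤ j) (hjN : j ≤ N) (x : ℝ) :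
    ∑ k ∈ Finset.Icc 1 N, Gmat k j * x^(k-1)
      = ((2*(j:ℝ)-1)/2) * (legendre (j-1)).eval x := by
  have hev : (legendre (j-1)).eval x
      = ∑ t ∈ Finset.range j, (legendre (j-1)).coeff t * x^t := by
    apply Polynomial.eval_eq_sum_range'
    have := leg_deg (j-1)
    omega
  rw [hev, Finset.mul_sum]
  rw [← Finset.Ico_add_one_right_eq_Icc, Finset.sum_Ico_eq_sum_range]
  have hNj : Finset.range j ⊆ Finset.range (N + 1 - 1) := by
    apply Finset.range_subset_range.mpr
    omega
  rw [← Finset.sum_subset hNj]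
  · apply Finset.sum_congr rfl
    intro t htj
    rw [Finset.mem_range] at htj
    have e1 : 1 + t = t + 1 := by omega
    rw [e1]
    have e2 : t + 1 - 1 = t := by omega
    rw [e2, G_coeff t j hj1 htj]
    ring
  · intro t htN htj
    rw [Finset.mem_range] at htj
    have : ¬ (1 + t ≤ j) := by omega
    rw [show Gmat (1+t) j = 0 from if_neg (fun hc => this hc.1)]
    ring

/-- For every N ≥ 1, the N × N matrix G is the inverse of the N × N matrix F:
Σ_{k=1}^{N} F_{ik} G_{kj} = δ_{ij} for all 1 ≤ i, j ≤ N. -/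
theorem stmt_12 (N : ℕ) (hN : 1 ≤ N) (i j : ℕ) (hi1 : 1 ≤ i) (hiN : i ≤ N)
    (hj1 : 1 ≤ j) (hjN : j ≤ N) :
    (∑ k ∈ Finset.Icc 1 N, Fmat i k * Gmat k j) = if i = j then 1 else 0 := by
  have step1 : ∀ k, Fmat i k * Gmat k j
      = ∫ η in (-1:ℝ)..1, (legendre (i-1)).eval η * η^(k-1) * Gmat k j := by
    intro k
    rw [Fmat, ← intervalIntegral.integral_mul_const]
  have hcont : ∀ k : ℕ, IntervalIntegrable
      (fun η : ℝ => (legendre (i-1)).eval η * η^(k-1) * Gmat k j) MeasureTheory.volume (-1:ℝ) 1 := by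
    intro k
    apply Continuous.intervalIntegrable
    exact ((legendre (i-1)).continuous.mul (continuous_pow _)).mul continuous_const
  calc (∑ k ∈ Finset.Icc 1 N, Fmat i k * Gmat k j)
      = ∑ k ∈ Finset.Icc 1 N, ∫ η in (-1:ℝ)..1,
          (legendre (i-1)).eval η * η^(k-1) * Gmat k j := by
        exact Finset.sum_congr rfl (fun k _ => step1 k)
    _ = ∫ η in (-1:ℝ)..1, ∑ k ∈ Finset.Icc 1 N,
          (legendre (i-1)).eval η * η^(k-1) * Gmat k j := by
        rw [intervalIntegral.integral_finset_sum]
        intro k _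
        exact hcont k
    _ = ∫ η in (-1:ℝ)..1, (legendre (i-1)).eval η
          * (((2*(j:ℝ)-1)/2) * (legendre (j-1)).eval η) := by
        apply intervalIntegral.integral_congr
        intro x _
        simp only []
        rw [← G_sum j N hj1 hjN x, Finset.mul_sum]
        apply Finset.sum_congr rfl
        intro k _
        ring
    _ = ((2*(j:ℝ)-1)/2) * ∫ η in (-1:ℝ)..1,
          (legendre (i-1)).eval η * (legendre (j-1)).eval η := by
        rw [← intervalIntegral.integral_const_mul]
        apply intervalIntegral.integral_congr
        intro x _
        ring
    _ = if i = j then 1 else 0 := by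
        by_cases hij : i = j
        · subst hij
          rw [if_pos rfl, leg_norm]
          have hc : (2*((i-1 : ℕ):ℝ)+1) = 2*(i:ℝ)-1 := by
            have : ((i-1 : ℕ):ℝ) = (i:ℝ) - 1 := by
              push_cast [Nat.cast_sub hi1]
              ring
            rw [this]; ring
          rw [hc]
          have hne : (2*(i:ℝ)-1) ≠ 0 := by
            have : (1:ℝ) ≤ (i:ℝ) := by exact_mod_cast hi1
            nlinarith
          rw [div_mul_div_comm, mul_comm (2*(i:ℝ)-1) 2]
          exact div_self (by
            apply mul_ne_zero
            · norm_num
            · exact hne)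
        · rw [if_neg hij, leg_ort]
          · ring
          · omega
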